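/- If the PCP instance L has no solution, then Duplicator has a winning strategy in the two-buffer simulation game with two unbounded buffers on 𝒜_L and ℬ_L; i.e., 𝒜_L ⊑(ω,ω) ℬ_L. -/

import Mathlib

open scoped Classical

/-- A Büchi automaton over alphabet `S`. -/
structure BA (S : Type) where
  Q : Type
  init : Q
  trans : Q → S → Q → Prop
  acc : Q → Prop

/-- The Büchi language of `A`: infinite words with a run from the initial state
visiting accepting states infinitely often. -/
def BA.Lang {S : Type} (A : BA S) : Set (ℕ → S) :=
  { w | ∃ ρ : ℕ → A.Q, ρ 0 = A.init ∧ (∀ n, A.trans (ρ n) (w n) (ρ (n+1))) ∧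
        ∀ n, ∃ m, n ≤ m ∧ A.acc (ρ m) }

/-- A configuration of the two-buffer simulation game: Spoiler's state, contents of
the two FIFO buffers (head = oldest letter), Duplicator's state. -/
structure Cfg {S : Type} (A B : BA S) where
  qa : A.Q
  b1 : List S
  b2 : List S
  qb : B.Q

/-- The configuration after Spoiler's move `m = (a, q')`: his state becomes `q'` and
the letter `a` is appended to buffer `σ a` (`true` = buffer 1, `false` = buffer 2). -/
def midCfg {S : Type} {A B : BA S} (σ : S → Bool) (c : Cfg A B) (m : S × A.Q) : Cfg A B :=
  ⟨m.2, if σ m.1 then c.b1 ++ [m.1] else c.b1, if σ m.1 then c.b2 else c.b2 ++ [m.1], c.qb⟩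

/-- Applying a finite sequence of Duplicator consumption steps: each step picks a buffer
(`true` = buffer 1) and a successor state, consuming the oldest letter of that buffer
along a matching transition of `B`.  Returns `none` if some step is illegal. -/
noncomputable def dupApply {S : Type} (A B : BA S) :
    Cfg A B → List (Bool × B.Q) → Option (Cfg A B)
  | c, [] => some c
  | c, (j, p') :: ms =>
    if j then
      match c.b1 with
      | [] => none
      | b :: β => if B.trans c.qb b p' then dupApply A B ⟨c.qa, β, c.b2, p'⟩ ms else none
    else
      match c.b2 with
      | [] => none
      | b :: β => if B.trans c.qb b p' then dupApply A B ⟨c.qa, c.b1, β, p'⟩ ms else none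

/-- The configuration at the start of round `n` (i.e. after Duplicator's moves of
round `n-1`), given Spoiler's moves `sp` and Duplicator's responses `dm`;
`none` once an illegal move has occurred. -/
noncomputable def playCfg {S : Type} (A B : BA S) (σ : S → Bool)
    (sp : ℕ → S × A.Q) (dm : ℕ → List (Bool × B.Q)) : ℕ → Option (Cfg A B)
  | 0 => some ⟨A.init, [], [], B.init⟩
  | n+1 =>
    match playCfg A B σ sp dm n with
    | none => none
    | some c =>
      if A.trans c.qa (sp n).1 (sp n).2 then dupApply A B (midCfg σ c (sp n)) (dm n) else none

/-- Number of letters put into buffer `j` by Spoiler during the first `n` rounds. -/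
noncomputable def pushed {S : Type} {QA : Type} (σ : S → Bool) (sp : ℕ → S × QA)
    (j : Bool) (n : ℕ) : ℕ :=
  ((Finset.range n).filter fun i => σ (sp i).1 = j).card

/-- Number of letters consumed from buffer `j` by Duplicator during the first `n` rounds. -/
noncomputable def consumed {QB : Type} (dm : ℕ → List (Bool × QB)) (j : Bool) (n : ℕ) : ℕ :=
  ∑ i ∈ Finset.range n, ((dm i).filter fun x => x.1 = j).length

/-- Duplicator's strategy is consistent with the moves `dm` of a play. -/
def Consistent {S : Type} (A B : BA S)
    (dstrat : List ((S × A.Q) × List (Bool × B.Q)) → (S × A.Q) → List (Bool × B.Q))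
    (sp : ℕ → S × A.Q) (dm : ℕ → List (Bool × B.Q)) : Prop :=
  ∀ n, dm n = dstrat (List.ofFn fun i : Fin n => (sp i, dm i)) (sp n)

/-- Spoiler's moves are legal as long as the play is defined. -/
def SpLegal {S : Type} (A B : BA S) (σ : S → Bool)
    (sp : ℕ → S × A.Q) (dm : ℕ → List (Bool × B.Q)) : Prop :=
  ∀ n c, playCfg A B σ sp dm n = some c → A.trans c.qa (sp n).1 (sp n).2

/-- Duplicator's winning condition for a play of the two-buffer game with
capacities `(k1, k2)`: the buffers never exceed their capacities (checked after her
moves), and either Spoiler's run visits accepting states only finitely often, or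
every letter put into a buffer is eventually consumed and Duplicator's run visits
accepting states infinitely often. -/
def Win2 {S : Type} (A B : BA S) (σ : S → Bool) (k1 k2 : ℕ∞)
    (sp : ℕ → S × A.Q) (dm : ℕ → List (Bool × B.Q)) : Prop :=
  (∀ n c, playCfg A B σ sp dm n = some c →
      (c.b1.length : ℕ∞) ≤ k1 ∧ (c.b2.length : ℕ∞) ≤ k2) ∧
  ((∃ N, ∀ n, N ≤ n → ¬ A.acc (sp n).2) ∨
    ((∀ n j, ∃ m, pushed σ sp j n ≤ consumed dm j m) ∧
     (∀ n, ∃ m, n ≤ m ∧ ∃ x ∈ dm m, B.acc x.2)))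

/-- `dstrat` is a winning strategy for Duplicator in the two-buffer simulation game on
`A`, `B` with letter distribution `σ` and capacities `(k1, k2)`: against every legal
behaviour of Spoiler, all of Duplicator's prescribed moves are legal (the play never
breaks) and the resulting play is won by Duplicator. -/
def WinningStrat2 {S : Type} (A B : BA S) (σ : S → Bool) (k1 k2 : ℕ∞)
    (dstrat : List ((S × A.Q) × List (Bool × B.Q)) → (S × A.Q) → List (Bool × B.Q)) : Prop :=
  ∀ sp dm, Consistent A B dstrat sp dm → SpLegal A B σ sp dm →
    (∀ n, (playCfg A B σ sp dm n).isSome) ∧ Win2 A B σ k1 k2 sp dm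

/-- Two-buffer simulation `A ⊑(k1,k2) B`: Duplicator has a winning strategy. -/
def Sim2 {S : Type} (A B : BA S) (σ : S → Bool) (k1 k2 : ℕ∞) : Prop :=
  ∃ dstrat, WinningStrat2 A B σ k1 k2 dstrat
/-- The alphabet `{0, 1, #, 0̄, 1̄, #̄}` used in the PCP reduction. -/
inductive PL | z | o | hash | zb | ob | hashb
deriving DecidableEq

/-- Unbarred copy of a bit. -/
def pl : Bool → PL | false => .z | true => .o

/-- Barred copy of a bit. -/
def br : Bool → PL | false => .zb | true => .ob

/-- The word `u · v̄` over `PL` associated with a PCP pair `(u, v)`. -/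
def wrd (u v : List Bool) : List PL := u.map pl ++ v.map br

/-- The distribution function of the PCP reduction: unbarred letters go to
buffer 1 (`true`), barred letters to buffer 2 (`false`). -/
def σPL : PL → Bool
  | .z => true | .o => true | .hash => true
  | .zb => false | .ob => false | .hashb => false

/-- The automaton `𝒜_L` of the PCP reduction for the instance
`L = {(u i, v i) | i < nn}`.  States: `Sum.inl 0 = s` (initial), `Sum.inl 1 = t`
(the common hub), `Sum.inl 2 = h` (between `#` and `#̄`), `Sum.inl 3 = r`
(accepting), and `Sum.inr (i, k)` for the internal states of the path reading
`u_i · v̄_i` (position `k` reached after `k` letters). -/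
def AL (nn : ℕ) (u v : Fin nn → List Bool) : BA PL where
  Q := Fin 4 ⊕ (Fin nn × ℕ)
  init := Sum.inl 0
  acc := fun q => q = Sum.inl 3
  trans := fun q x q' =>
    (∃ i : Fin nn, (q = Sum.inl 0 ∨ q = Sum.inl 1) ∧
        (wrd (u i) (v i))[0]? = some x ∧ q' = Sum.inr (i, 1)) ∨
    (∃ i k, q = Sum.inr (i, k) ∧ (wrd (u i) (v i))[k]? = some x ∧
        k + 1 < (wrd (u i) (v i)).length ∧ q' = Sum.inr (i, k + 1)) ∨
    (∃ i k, q = Sum.inr (i, k) ∧ (wrd (u i) (v i))[k]? = some x ∧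
        k + 1 = (wrd (u i) (v i)).length ∧ q' = Sum.inl 1) ∨
    (q = Sum.inl 1 ∧ x = .hash ∧ q' = Sum.inl 2) ∨
    (q = Sum.inl 2 ∧ x = .hashb ∧ q' = Sum.inl 3) ∨
    (q = Sum.inl 3 ∧ x = .hash ∧ q' = Sum.inl 2)

/-- The automaton `ℬ_L` of the PCP reduction.  States (as elements of `Fin 7`):
`0 = p0` (initial), `1 = p1`, `2 = p2`, `3 = p3`, `4 = p4`, `5 = p5` (accepting
sink), `6 = q`. -/
def BL : BA PL where
  Q := Fin 7
  init := 0
  acc := fun q => q = 5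
  trans := fun q x q' =>
    (q = 0 ∧ x = .z ∧ q' = 2) ∨ (q = 2 ∧ x = .zb ∧ q' = 0) ∨
    (q = 0 ∧ x = .o ∧ q' = 4) ∨ (q = 4 ∧ x = .ob ∧ q' = 0) ∨
    (q = 0 ∧ x = .z ∧ q' = 1) ∨ (q = 1 ∧ (x = .ob ∨ x = .hashb) ∧ q' = 5) ∨
    (q = 0 ∧ x = .o ∧ q' = 6) ∨ (q = 6 ∧ (x = .zb ∨ x = .hashb) ∧ q' = 5) ∨
    (q = 0 ∧ x = .hash ∧ q' = 3) ∨ (q = 3 ∧ (x = .zb ∨ x = .ob) ∧ q' = 5) ∨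
    (q = 5 ∧ q' = 5)


section Generic
variable {S : Type} {A B : BA S}

lemma dup_true {qa : A.Q} {qb p' : B.Q} {b : S} {β b2 : List S} {ms}
    (h : B.trans qb b p') :
    dupApply A B ⟨qa, b::β, b2, qb⟩ ((true,p')::ms) = dupApply A B ⟨qa, β, b2, p'⟩ ms := by
  simp [dupApply, h]

lemma dup_false {qa : A.Q} {qb p' : B.Q} {b : S} {β b1 : List S} {ms}
    (h : B.trans qb b p') :
    dupApply A B ⟨qa, b1, b::β, qb⟩ ((false,p')::ms) = dupApply A B ⟨qa, b1, β, p'⟩ ms := by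
  simp [dupApply, h]

lemma dupApply_append (c : Cfg A B) (ms1 ms2 : List (Bool × B.Q)) :
    dupApply A B c (ms1 ++ ms2) =
      (dupApply A B c ms1).bind (fun c' => dupApply A B c' ms2) := by
  induction ms1 generalizing c with
  | nil => simp [dupApply]
  | cons m ms ih =>
    obtain ⟨j, p'⟩ := m
    cases j
    · cases h2 : c.b2 with
      | nil => simp [dupApply, h2]
      | cons b β =>
        by_cases ht : B.trans c.qb b p' <;> simp [dupApply, h2, ht, ih]
    · cases h1 : c.b1 with
      | nil => simp [dupApply, h1]
      | cons b β =>
        by_cases ht : B.trans c.qb b p' <;> simp [dupApply, h1, ht, ih]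

lemma dupApply_len {c c' : Cfg A B} {ms} (h : dupApply A B c ms = some c') :
    c.b1.length = c'.b1.length + (ms.filter fun x => x.1 = true).length ∧
    c.b2.length = c'.b2.length + (ms.filter fun x => x.1 = false).length ∧
    c'.qa = c.qa := by
  induction ms generalizing c with
  | nil =>
    simp [dupApply] at h; subst h; simp
  | cons m ms ih =>
    obtain ⟨j, p'⟩ := m
    cases j
    · cases h2 : c.b2 with
      | nil => simp [dupApply, h2] at h
      | cons b β =>
        by_cases ht : B.trans c.qb b p'
        · simp only [dupApply, h2, ht, if_pos, Bool.false_eq_true, if_false] at h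
          obtain ⟨i1, i2, i3⟩ := ih h
          simp only [List.filter_cons] at *
          refine ⟨?_, ?_, i3⟩ <;> simp_all <;> omega
        · simp [dupApply, h2, ht] at h
    · cases h1 : c.b1 with
      | nil => simp [dupApply, h1] at h
      | cons b β =>
        by_cases ht : B.trans c.qb b p'
        · simp only [dupApply, h1, ht, if_pos, if_true] at h
          obtain ⟨i1, i2, i3⟩ := ih h
          simp only [List.filter_cons] at *
          refine ⟨?_, ?_, i3⟩ <;> simp_all <;> omega
        · simp [dupApply, h1, ht] at h

lemma playCfg_zero (σ : S → Bool) (sp : ℕ → S × A.Q) (dm : ℕ → List (Bool × B.Q)) :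
    playCfg A B σ sp dm 0 = some ⟨A.init, [], [], B.init⟩ := rfl

lemma playCfg_succ_some {σ : S → Bool} {sp : ℕ → S × A.Q} {dm : ℕ → List (Bool × B.Q)}
    {n : ℕ} {c : Cfg A B} (hc : playCfg A B σ sp dm n = some c)
    (ht : A.trans c.qa (sp n).1 (sp n).2) :
    playCfg A B σ sp dm (n+1) = dupApply A B (midCfg σ c (sp n)) (dm n) := by
  rw [playCfg, hc]; simp [ht]

lemma playCfg_succ_none {σ : S → Bool} {sp : ℕ → S × A.Q} {dm : ℕ → List (Bool × B.Q)}
    {n : ℕ} (hc : playCfg A B σ sp dm n = none) :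
    playCfg A B σ sp dm (n+1) = none := by
  rw [playCfg, hc]

lemma playCfg_succ_illegal {σ : S → Bool} {sp : ℕ → S × A.Q} {dm : ℕ → List (Bool × B.Q)}
    {n : ℕ} {c : Cfg A B} (hc : playCfg A B σ sp dm n = some c)
    (ht : ¬ A.trans c.qa (sp n).1 (sp n).2) :
    playCfg A B σ sp dm (n+1) = none := by
  rw [playCfg, hc]; simp [ht]

lemma pushed_succ {QA : Type} (σ : S → Bool) (sp : ℕ → S × QA) (j : Bool) (n : ℕ) :
    pushed σ sp j (n+1) = pushed σ sp j n + if σ (sp n).1 = j then 1 else 0 := by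
  rw [pushed, pushed, Finset.range_add_one, Finset.filter_insert]
  split
  · rw [Finset.card_insert_of_notMem (by simp)]
  · simp

lemma pushed_mono {QA : Type} (σ : S → Bool) (sp : ℕ → S × QA) (j : Bool) {n m : ℕ}
    (h : n ≤ m) : pushed σ sp j n ≤ pushed σ sp j m :=
  Finset.card_le_card (Finset.filter_subset_filter _ (Finset.range_subset_range.2 h))

lemma consumed_succ {QB : Type} (dm : ℕ → List (Bool × QB)) (j : Bool) (n : ℕ) :
    consumed dm j (n+1) = consumed dm j n + ((dm n).filter fun x => x.1 = j).length :=
  Finset.sum_range_succ _ _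

lemma play_count {σ : S → Bool} {sp : ℕ → S × A.Q} {dm : ℕ → List (Bool × B.Q)} :
    ∀ n (c : Cfg A B), playCfg A B σ sp dm n = some c →
      pushed σ sp true n = consumed dm true n + c.b1.length ∧
      pushed σ sp false n = consumed dm false n + c.b2.length := by
  intro n
  induction n with
  | zero =>
    intro c h
    rw [playCfg_zero] at h
    cases h
    simp [pushed, consumed]
  | succ n ih =>
    intro c' h
    cases hc : playCfg A B σ sp dm n with
    | none => rw [playCfg_succ_none hc] at h; cases h
    | some c =>
      by_cases ht : A.trans c.qa (sp n).1 (sp n).2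
      · rw [playCfg_succ_some hc ht] at h
        obtain ⟨l1, l2, -⟩ := dupApply_len h
        obtain ⟨p1, p2⟩ := ih c hc
        rw [pushed_succ, pushed_succ, consumed_succ, consumed_succ, p1, p2]
        by_cases hσ : σ (sp n).1 = true
        · have hm1 : (midCfg σ c (sp n)).b1 = c.b1 ++ [(sp n).1] := by
            rw [midCfg]; simp [hσ]
          have hm2 : (midCfg σ c (sp n)).b2 = c.b2 := by
            rw [midCfg]; simp [hσ]
          rw [hm1] at l1; rw [hm2] at l2
          rw [if_pos hσ, if_neg (by simp [hσ])]
          simp only [List.length_append, List.length_singleton] at l1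
          omega
        · have hσ' : σ (sp n).1 = false := by simpa using hσ
          have hm1 : (midCfg σ c (sp n)).b1 = c.b1 := by
            rw [midCfg]; simp [hσ']
          have hm2 : (midCfg σ c (sp n)).b2 = c.b2 ++ [(sp n).1] := by
            rw [midCfg]; simp [hσ']
          rw [hm1] at l1; rw [hm2] at l2
          rw [if_neg hσ, if_pos hσ']
          simp only [List.length_append, List.length_singleton] at l2
          omega
      · rw [playCfg_succ_illegal hc ht] at h; cases h

end Generic


section BLlemmas
variable {A : BA PL}

lemma blt1 : BL.trans (0 : Fin 7) .z (2 : Fin 7) := Or.inl ⟨rfl, rfl, rfl⟩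
lemma blt2 : BL.trans (2 : Fin 7) .zb (0 : Fin 7) := Or.inr (Or.inl ⟨rfl, rfl, rfl⟩)
lemma blt3 : BL.trans (0 : Fin 7) .o (4 : Fin 7) := Or.inr (Or.inr (Or.inl ⟨rfl, rfl, rfl⟩))
lemma blt4 : BL.trans (4 : Fin 7) .ob (0 : Fin 7) :=
  Or.inr (Or.inr (Or.inr (Or.inl ⟨rfl, rfl, rfl⟩)))
lemma blt5 : BL.trans (0 : Fin 7) .z (1 : Fin 7) :=
  Or.inr (Or.inr (Or.inr (Or.inr (Or.inl ⟨rfl, rfl, rfl⟩))))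
lemma blt6 {x : PL} (h : x = .ob ∨ x = .hashb) : BL.trans (1 : Fin 7) x (5 : Fin 7) :=
  Or.inr (Or.inr (Or.inr (Or.inr (Or.inr (Or.inl ⟨rfl, h, rfl⟩)))))
lemma blt7 : BL.trans (0 : Fin 7) .o (6 : Fin 7) :=
  Or.inr (Or.inr (Or.inr (Or.inr (Or.inr (Or.inr (Or.inl ⟨rfl, rfl, rfl⟩))))))
lemma blt8 {x : PL} (h : x = .zb ∨ x = .hashb) : BL.trans (6 : Fin 7) x (5 : Fin 7) :=
  Or.inr (Or.inr (Or.inr (Or.inr (Or.inr (Or.inr (Or.inr (Or.inl ⟨rfl, h, rfl⟩)))))))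
lemma blt9 : BL.trans (0 : Fin 7) .hash (3 : Fin 7) :=
  Or.inr (Or.inr (Or.inr (Or.inr (Or.inr (Or.inr (Or.inr (Or.inr (Or.inl ⟨rfl, rfl, rfl⟩))))))))
lemma blt10 {x : PL} (h : x = .zb ∨ x = .ob) : BL.trans (3 : Fin 7) x (5 : Fin 7) :=
  Or.inr (Or.inr (Or.inr (Or.inr (Or.inr (Or.inr (Or.inr (Or.inr (Or.inr
    (Or.inl ⟨rfl, h, rfl⟩)))))))))
lemma blt11 (x : PL) : BL.trans (5 : Fin 7) x (5 : Fin 7) :=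
  Or.inr (Or.inr (Or.inr (Or.inr (Or.inr (Or.inr (Or.inr (Or.inr (Or.inr
    (Or.inr ⟨rfl, rfl⟩)))))))))

/-- Flushing both buffers while in the accepting sink `p5`. -/
def flushMoves (n1 n2 : ℕ) : List (Bool × Fin 7) :=
  List.replicate n1 (true, 5) ++ List.replicate n2 (false, 5)

lemma dup_flush1 (qa : A.Q) (l1 l2 : List PL) :
    dupApply A BL ⟨qa, l1, l2, (5 : Fin 7)⟩ (List.replicate l1.length (true, (5:Fin 7)))
      = some ⟨qa, [], l2, (5 : Fin 7)⟩ := by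
  induction l1 with
  | nil => rfl
  | cons b β ih => rw [List.length_cons, List.replicate_succ, dup_true (blt11 b), ih]

lemma dup_flush2 (qa : A.Q) (l2 : List PL) :
    dupApply A BL ⟨qa, [], l2, (5 : Fin 7)⟩ (List.replicate l2.length (false, (5:Fin 7)))
      = some ⟨qa, [], [], (5 : Fin 7)⟩ := by
  induction l2 with
  | nil => rfl
  | cons b β ih => rw [List.length_cons, List.replicate_succ, dup_false (blt11 b), ih]

lemma dup_flush (qa : A.Q) (l1 l2 : List PL) :
    dupApply A BL ⟨qa, l1, l2, (5 : Fin 7)⟩ (flushMoves l1.length l2.length)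
      = some ⟨qa, [], [], (5 : Fin 7)⟩ := by
  erw [flushMoves, dupApply_append, dup_flush1]
  exact dup_flush2 qa l2

/-- Duplicator's state after consuming the buffer-1 letter at the mismatch. -/
def step1 : PL → Fin 7
  | .z => 1 | .o => 6 | .hash => 3 | _ => 0

lemma dup_mismatch (qa : A.Q) {a b : PL} (l1 l2 : List PL)
    (hab : (a = .z ∧ (b = .ob ∨ b = .hashb)) ∨ (a = .o ∧ (b = .zb ∨ b = .hashb)) ∨
      (a = .hash ∧ (b = .zb ∨ b = .ob))) :
    dupApply A BL ⟨qa, a::l1, b::l2, (0 : Fin 7)⟩ [(true, step1 a), (false, (5 : Fin 7))]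
      = some ⟨qa, l1, l2, (5 : Fin 7)⟩ := by
  rcases hab with ⟨ha, hb⟩ | ⟨ha, hb⟩ | ⟨ha, hb⟩ <;> subst ha
  · rw [show step1 .z = 1 from rfl, dup_true blt5, dup_false (blt6 hb)]; rfl
  · rw [show step1 .o = 6 from rfl, dup_true blt7, dup_false (blt8 hb)]; rfl
  · rw [show step1 .hash = 3 from rfl, dup_true blt9, dup_false (blt10 hb)]; rfl

/-- Duplicator's moves consuming a balanced bit pair. -/
def pairMoves : Bool → List (Bool × Fin 7)
  | false => [(true, 2), (false, 0)]
  | true => [(true, 4), (false, 0)]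

lemma dup_pair (qa : A.Q) (c : Bool) (l1 l2 : List PL) :
    dupApply A BL ⟨qa, pl c :: l1, br c :: l2, (0 : Fin 7)⟩ (pairMoves c)
      = some ⟨qa, l1, l2, (0 : Fin 7)⟩ := by
  cases c
  · erw [show pl false = .z from rfl, show br false = .zb from rfl, pairMoves,
      dup_true blt1, dup_false blt2]; rfl
  · erw [show pl true = .o from rfl, show br true = .ob from rfl, pairMoves,
      dup_true blt3, dup_false blt4]; rfl

/-- Core consumption lemma: from mismatching buffer contents Duplicator can empty
both buffers and reach the accepting sink. -/
lemma dup_core (qa : A.Q) : ∀ U V : List Bool, U ≠ V →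
    ∃ ms : List (Bool × Fin 7),
      dupApply A BL ⟨qa, U.map pl ++ [PL.hash], V.map br ++ [PL.hashb], (0 : Fin 7)⟩ ms
        = some ⟨qa, [], [], (5 : Fin 7)⟩ ∧ ∃ x ∈ ms, x.2 = (5 : Fin 7) := by
  intro U
  induction U with
  | nil =>
    intro V hV
    cases V with
    | nil => exact absurd rfl hV
    | cons c V' =>
      have hab : (PL.hash = PL.z ∧ (br c = PL.ob ∨ br c = PL.hashb)) ∨
          (PL.hash = PL.o ∧ (br c = PL.zb ∨ br c = PL.hashb)) ∨
          (PL.hash = PL.hash ∧ (br c = PL.zb ∨ br c = PL.ob)) := by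
        cases c <;> simp [br]
      refine ⟨[(true, step1 .hash), (false, 5)] ++
        flushMoves 0 (V'.map br ++ [PL.hashb]).length, ?_, ⟨(false, (5:Fin 7)), by simp, rfl⟩⟩
      erw [dupApply_append]
      rw [show ([] : List Bool).map pl ++ [PL.hash] = PL.hash :: [] from rfl]
      rw [show (c :: V').map br ++ [PL.hashb] = br c :: (V'.map br ++ [PL.hashb]) by simp]
      erw [dup_mismatch qa _ _ hab]
      exact dup_flush qa [] _
  | cons a U' ih =>
    intro V hV
    cases V with
    | nil =>
      have hab : (pl a = PL.z ∧ (PL.hashb = PL.ob ∨ PL.hashb = PL.hashb)) ∨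
          (pl a = PL.o ∧ (PL.hashb = PL.zb ∨ PL.hashb = PL.hashb)) ∨
          (pl a = PL.hash ∧ (PL.hashb = PL.zb ∨ PL.hashb = PL.ob)) := by
        cases a <;> simp [pl]
      refine ⟨[(true, step1 (pl a)), (false, 5)] ++
        flushMoves (U'.map pl ++ [PL.hash]).length 0, ?_, ⟨(false, (5:Fin 7)), by simp, rfl⟩⟩
      erw [dupApply_append]
      rw [show (a :: U').map pl ++ [PL.hash] = pl a :: (U'.map pl ++ [PL.hash]) by simp]
      rw [show ([] : List Bool).map br ++ [PL.hashb] = PL.hashb :: [] from rfl]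
      erw [dup_mismatch qa _ _ hab]
      exact dup_flush qa _ []
    | cons c V' =>
      by_cases hc : a = c
      · subst hc
        have hUV : U' ≠ V' := fun h => hV (by rw [h])
        obtain ⟨ms, hms, x, hx, hx5⟩ := ih V' hUV
        refine ⟨pairMoves a ++ ms, ?_, ⟨x, by simp [hx], hx5⟩⟩
        erw [dupApply_append]
        rw [show (a :: U').map pl ++ [PL.hash] = pl a :: (U'.map pl ++ [PL.hash]) by simp]
        rw [show (a :: V').map br ++ [PL.hashb] = br a :: (V'.map br ++ [PL.hashb]) by simp]
        erw [dup_pair qa a]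
        exact hms
      · have hab : (pl a = PL.z ∧ (br c = PL.ob ∨ br c = PL.hashb)) ∨
            (pl a = PL.o ∧ (br c = PL.zb ∨ br c = PL.hashb)) ∨
            (pl a = PL.hash ∧ (br c = PL.zb ∨ br c = PL.ob)) := by
          cases a <;> cases c <;> simp_all [pl, br]
        refine ⟨[(true, step1 (pl a)), (false, 5)] ++
          flushMoves (U'.map pl ++ [PL.hash]).length (V'.map br ++ [PL.hashb]).length,
          ?_, ⟨(false, (5:Fin 7)), by simp, rfl⟩⟩
        erw [dupApply_append]
        rw [show (a :: U').map pl ++ [PL.hash] = pl a :: (U'.map pl ++ [PL.hash]) by simp]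
        rw [show (c :: V').map br ++ [PL.hashb] = br c :: (V'.map br ++ [PL.hashb]) by simp]
        erw [dup_mismatch qa _ _ hab]
        exact dup_flush qa _ _

end BLlemmas


lemma ofFn_snoc {α : Type _} (f : ℕ → α) (n : ℕ) :
    (List.ofFn fun i : Fin (n+1) => f i.1) = (List.ofFn fun i : Fin n => f i.1) ++ [f n] := by
  rw [List.ofFn_succ', List.concat_eq_append]
  simp

lemma take_succ_of_get? {α : Type _} {l : List α} {k : ℕ} {a : α} (h : l[k]? = some a) :
    l.take (k+1) = l.take k ++ [a] := by
  rw [List.take_succ] at *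
  rw [h]; rfl

section ALlemmas
variable (nn : ℕ) (u v : Fin nn → List Bool)

lemma σPL_pl (b : Bool) : σPL (pl b) = true := by cases b <;> rfl
lemma σPL_br (b : Bool) : σPL (br b) = false := by cases b <;> rfl

/-- The word read along blocks `u_i v̄_i` for `i ∈ idx`. -/
def blocks (idx : List (Fin nn)) : List PL := (idx.map (fun i => wrd (u i) (v i))).flatten

lemma blocks_nil : blocks nn u v [] = [] := rfl

lemma blocks_cons (i : Fin nn) (idx : List (Fin nn)) :
    blocks nn u v (i :: idx) = wrd (u i) (v i) ++ blocks nn u v idx := by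
  simp [blocks]

lemma blocks_snoc (idx : List (Fin nn)) (i : Fin nn) :
    blocks nn u v (idx ++ [i]) = blocks nn u v idx ++ wrd (u i) (v i) := by
  simp [blocks]

lemma filter_map_pl_t (a : List Bool) : (a.map pl).filter σPL = a.map pl :=
  List.filter_eq_self.2 (by rintro x hx; obtain ⟨c, -, rfl⟩ := List.mem_map.1 hx; exact σPL_pl c)

lemma filter_map_br_t (b : List Bool) : (b.map br).filter σPL = [] := by
  induction b with
  | nil => rfl
  | cons c t ih => simp [σPL_br, ih]

lemma filter_map_pl_f (a : List Bool) : (a.map pl).filter (fun x => !σPL x) = [] := by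
  induction a with
  | nil => rfl
  | cons c t ih => simp [σPL_pl, ih]

lemma filter_map_br_f (b : List Bool) : (b.map br).filter (fun x => !σPL x) = b.map br :=
  List.filter_eq_self.2
    (by rintro x hx; obtain ⟨c, -, rfl⟩ := List.mem_map.1 hx; simp [σPL_br c])

lemma filter_wrd_t (a b : List Bool) : (wrd a b).filter σPL = a.map pl := by
  rw [wrd, List.filter_append, filter_map_pl_t, filter_map_br_t, List.append_nil]

lemma filter_wrd_f (a b : List Bool) : (wrd a b).filter (fun x => !σPL x) = b.map br := by
  rw [wrd, List.filter_append, filter_map_pl_f, filter_map_br_f, List.nil_append]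

lemma filter_blocks_t : ∀ idx : List (Fin nn),
    (blocks nn u v idx).filter σPL = ((idx.map u).flatten).map pl
  | [] => rfl
  | i :: idx => by
    rw [blocks_cons, List.filter_append, filter_wrd_t, filter_blocks_t idx]
    simp

lemma filter_blocks_f : ∀ idx : List (Fin nn),
    (blocks nn u v idx).filter (fun x => !σPL x) = ((idx.map v).flatten).map br
  | [] => rfl
  | i :: idx => by
    rw [blocks_cons, List.filter_append, filter_wrd_f, filter_blocks_f idx]
    simp

/-- Invariant relating the word read so far with the current state of `𝒜_L`
(before the first visit to the accepting state). -/
def StInv (w : List PL) : (Fin 4 ⊕ (Fin nn × ℕ)) → Prop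
  | Sum.inl j =>
    if j = 0 then w = []
    else if j = 1 then ∃ idx : List (Fin nn), idx ≠ [] ∧ w = blocks nn u v idx
    else if j = 2 then ∃ idx : List (Fin nn), idx ≠ [] ∧ w = blocks nn u v idx ++ [PL.hash]
    else False
  | Sum.inr (i, k) => ∃ idx : List (Fin nn), w = blocks nn u v idx ++ (wrd (u i) (v i)).take k

lemma StInv_zero : StInv nn u v [] (Sum.inl 0) := by simp [StInv]

lemma StInv_step {q q' : Fin 4 ⊕ (Fin nn × ℕ)} {a : PL} {w : List PL}
    (hq : StInv nn u v w q) (ht : (AL nn u v).trans q a q') (hq' : q' ≠ Sum.inl 3) :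
    StInv nn u v (w ++ [a]) q' := by
  simp only [AL] at ht
  rcases ht with ⟨i, h01, hget, rfl⟩ | ⟨i, k, rfl, hget, hlt, rfl⟩ |
    ⟨i, k, rfl, hget, hlen, rfl⟩ | ⟨rfl, rfl, rfl⟩ | ⟨rfl, rfl, rfl⟩ | ⟨rfl, -⟩
  · -- entering a block
    rcases h01 with rfl | rfl
    · simp only [StInv, if_pos rfl] at hq
      subst hq
      refine ⟨[], ?_⟩
      rw [blocks_nil, take_succ_of_get? hget]
      simp
    · simp [StInv] at hq
      obtain ⟨idx, -, rfl⟩ := hq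
      refine ⟨idx, ?_⟩
      rw [take_succ_of_get? hget]
      simp
  · -- inside a block
    obtain ⟨idx, rfl⟩ := hq
    refine ⟨idx, ?_⟩
    rw [take_succ_of_get? hget]
    simp
  · -- completing a block
    obtain ⟨idx, rfl⟩ := hq
    have h2 : (wrd (u i) (v i)).take k ++ [a] = wrd (u i) (v i) := by
      rw [← take_succ_of_get? hget]
      exact List.take_of_length_le (le_of_eq hlen.symm)
    simp only [StInv]
    simp only [show ((1 : Fin 4) = 0) = False by simp, show ((1 : Fin 4) = 1) = True by simp,
      if_false, if_true]
    refine ⟨idx ++ [i], by simp, ?_⟩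
    rw [List.append_assoc, blocks_snoc, h2]
  · -- t → h reading #
    simp [StInv] at hq ⊢
    obtain ⟨idx, hne, rfl⟩ := hq
    exact ⟨idx, hne, by simp⟩
  · exact absurd rfl hq'
  · simp [StInv] at hq
lemma StInv_last {q : Fin 4 ⊕ (Fin nn × ℕ)} {a : PL} {w : List PL}
    (hq : StInv nn u v w q) (ht : (AL nn u v).trans q a (Sum.inl 3)) :
    a = PL.hashb ∧ ∃ idx : List (Fin nn), idx ≠ [] ∧ w = blocks nn u v idx ++ [PL.hash] := by
  simp only [AL] at ht
  rcases ht with ⟨i, h01, hget, heq⟩ | ⟨i, k, rfl, hget, hlt, heq⟩ |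
    ⟨i, k, rfl, hget, hlen, heq⟩ | ⟨rfl, rfl, heq⟩ | ⟨rfl, rfl, -⟩ | ⟨rfl, -⟩
  · exact absurd heq (by simp)
  · exact absurd heq (by simp)
  · exact absurd heq (by simp)
  · exact absurd heq (by simp)
  · refine ⟨rfl, ?_⟩
    simpa [StInv] using hq
  · simp [StInv] at hq

end ALlemmas


section Strategy
variable (nn : ℕ) (u v : Fin nn → List Bool)

/-- The big move sequence Duplicator plays when Spoiler first reaches the accepting
state, having read the word `w`. -/
noncomputable def bigMoves (w : List PL) : List (Bool × Fin 7) :=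
  if h : ∃ ms : List (Bool × Fin 7),
      dupApply (AL nn u v) BL
        ⟨(Sum.inl 3 : Fin 4 ⊕ (Fin nn × ℕ)), w.filter σPL, w.filter (fun x => !σPL x),
          (0 : Fin 7)⟩ ms
        = some ⟨(Sum.inl 3 : Fin 4 ⊕ (Fin nn × ℕ)), [], [], (5 : Fin 7)⟩ ∧
        ∃ x ∈ ms, x.2 = (5 : Fin 7)
  then h.choose else []

lemma bigMoves_spec (w : List PL)
    (h : ∃ ms : List (Bool × Fin 7),
      dupApply (AL nn u v) BL
        ⟨(Sum.inl 3 : Fin 4 ⊕ (Fin nn × ℕ)), w.filter σPL, w.filter (fun x => !σPL x),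
          (0 : Fin 7)⟩ ms
        = some ⟨(Sum.inl 3 : Fin 4 ⊕ (Fin nn × ℕ)), [], [], (5 : Fin 7)⟩ ∧
        ∃ x ∈ ms, x.2 = (5 : Fin 7)) :
    dupApply (AL nn u v) BL
        ⟨(Sum.inl 3 : Fin 4 ⊕ (Fin nn × ℕ)), w.filter σPL, w.filter (fun x => !σPL x),
          (0 : Fin 7)⟩ (bigMoves nn u v w)
        = some ⟨(Sum.inl 3 : Fin 4 ⊕ (Fin nn × ℕ)), [], [], (5 : Fin 7)⟩ ∧
        ∃ x ∈ bigMoves nn u v w, x.2 = (5 : Fin 7) := by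
  rw [bigMoves, dif_pos h]
  exact h.choose_spec

/-- Duplicator's winning strategy. -/
noncomputable def dstratL
    (hist : List ((PL × (AL nn u v).Q) × List (Bool × BL.Q)))
    (m : PL × (AL nn u v).Q) : List (Bool × BL.Q) :=
  if ∃ e ∈ hist, e.1.2 = (Sum.inl 3 : Fin 4 ⊕ (Fin nn × ℕ)) then [(σPL m.1, (5 : Fin 7))]
  else if m.2 = (Sum.inl 3 : Fin 4 ⊕ (Fin nn × ℕ)) then
    bigMoves nn u v ((hist.map fun e => e.1.1) ++ [m.1])
  else []

end Strategy

/-- If the PCP instance `L = {(u i, v i)}` (with nonempty words)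
has no solution, then Duplicator wins the two-buffer simulation game with two
unbounded buffers on `𝒜_L` and `ℬ_L`: `𝒜_L ⊑(ω,ω) ℬ_L`. -/
theorem pcp_no_solution_implies_duplicator_wins (nn : ℕ) (u v : Fin nn → List Bool)
    (hu : ∀ i, u i ≠ []) (hv : ∀ i, v i ≠ [])
    (hnosol : ¬ ∃ idx : List (Fin nn), idx ≠ [] ∧
      (idx.map u).flatten = (idx.map v).flatten) :
    Sim2 (AL nn u v) BL σPL ⊤ ⊤ := by
  classical
  refine ⟨dstratL nn u v, ?_⟩
  intro sp dm hcons hleg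
  -- the word read by Spoiler in the first `n` rounds
  have Wsnoc : ∀ n : ℕ, (List.ofFn fun i : Fin (n+1) => (sp i).1)
      = (List.ofFn fun i : Fin n => (sp i).1) ++ [(sp n).1] :=
    fun n => ofFn_snoc (fun k => (sp k).1) n
  -- the trigger condition of the strategy
  have trig_iff : ∀ n : ℕ,
      (∃ e ∈ (List.ofFn fun i : Fin n => (sp i, dm i)),
        e.1.2 = (Sum.inl 3 : Fin 4 ⊕ (Fin nn × ℕ))) ↔
      ∃ i, i < n ∧ (sp i).2 = (Sum.inl 3 : Fin 4 ⊕ (Fin nn × ℕ)) := by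
    intro n
    constructor
    · rintro ⟨e, he, h3⟩
      rw [List.mem_ofFn] at he
      obtain ⟨i, rfl⟩ := he
      exact ⟨i, i.2, h3⟩
    · rintro ⟨i, hi, h3⟩
      exact ⟨(sp i, dm i), by rw [List.mem_ofFn]; exact ⟨⟨i, hi⟩, rfl⟩, h3⟩
  -- phase 1: before the first visit of the accepting state, Duplicator skips
  have pre : ∀ n : ℕ, (∀ i, i < n → (sp i).2 ≠ Sum.inl 3) →
      (∀ i, i < n → dm i = []) ∧
      ∃ q : (AL nn u v).Q, playCfg (AL nn u v) BL σPL sp dm n =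
          some ⟨q, (List.ofFn fun i : Fin n => (sp i).1).filter σPL,
            (List.ofFn fun i : Fin n => (sp i).1).filter (fun x => !σPL x), (0 : Fin 7)⟩ ∧
        StInv nn u v (List.ofFn fun i : Fin n => (sp i).1) q := by
    intro n
    induction n with
    | zero =>
      intro _
      refine ⟨fun i hi => absurd hi (Nat.not_lt_zero i), Sum.inl 0, ?_, ?_⟩
      · rw [playCfg_zero]
        simp [List.ofFn_zero, AL, BL]
      · simpa [List.ofFn_zero] using StInv_zero nn u v
    | succ n ih =>
      intro h
      obtain ⟨hdm, q, hcfg, hinv⟩ := ih (fun i hi => h i (Nat.lt_succ_of_lt hi))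
      have hdm' : ∀ i, i < n+1 → dm i = [] := by
        intro i hi
        rcases Nat.lt_succ_iff_lt_or_eq.1 hi with hi' | rfl
        · exact hdm i hi'
        · have hnt : ¬ ∃ e ∈ (List.ofFn fun j : Fin i => (sp j, dm j)),
              e.1.2 = (Sum.inl 3 : Fin 4 ⊕ (Fin nn × ℕ)) := by
            rw [trig_iff]
            rintro ⟨j, hj, h3⟩
            exact h j (Nat.lt_succ_of_lt hj) h3
          erw [hcons i, dstratL, if_neg hnt, if_neg (h i (Nat.lt_succ_self i))]
      have ht := hleg n _ hcfg
      refine ⟨hdm', (sp n).2, ?_, ?_⟩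
      · rw [playCfg_succ_some hcfg ht, hdm' n (Nat.lt_succ_self n), Wsnoc n,
          List.filter_append, List.filter_append]
        cases hσ : σPL (sp n).1
        · simp [dupApply, midCfg, hσ]
        · simp [dupApply, midCfg, hσ]
      · rw [Wsnoc n]
        exact StInv_step nn u v hinv ht (h n (Nat.lt_succ_self n))
  by_cases htrig : ∃ n, (sp n).2 = (Sum.inl 3 : Fin 4 ⊕ (Fin nn × ℕ))
  · -- Spoiler eventually reaches the accepting state
    set T := Nat.find htrig with hTdef
    have hT : (sp T).2 = (Sum.inl 3 : Fin 4 ⊕ (Fin nn × ℕ)) := Nat.find_spec htrig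
    have hTmin : ∀ i, i < T → (sp i).2 ≠ Sum.inl 3 := fun i hi => Nat.find_min htrig hi
    obtain ⟨hdmpre, qT, hcfgT, hinvT⟩ := pre T hTmin
    have htT := hleg T _ hcfgT
    rw [hT] at htT
    obtain ⟨hhb, idx, hidx, hWT⟩ := StInv_last nn u v hinvT htT
    have hUV : (idx.map u).flatten ≠ (idx.map v).flatten := fun hE => hnosol ⟨idx, hidx, hE⟩
    have hw' : (List.ofFn fun i : Fin (T+1) => (sp i).1)
        = blocks nn u v idx ++ [PL.hash] ++ [PL.hashb] := by
      rw [Wsnoc T, hWT, hhb]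
    have hf1 : (List.ofFn fun i : Fin (T+1) => (sp i).1).filter σPL
        = ((idx.map u).flatten).map pl ++ [PL.hash] := by
      rw [hw', List.filter_append, List.filter_append, filter_blocks_t]
      simp [σPL]
    have hf2 : (List.ofFn fun i : Fin (T+1) => (sp i).1).filter (fun x => !σPL x)
        = ((idx.map v).flatten).map br ++ [PL.hashb] := by
      rw [hw', List.filter_append, List.filter_append, filter_blocks_f]
      simp [σPL]
    have hdmT : dm T = bigMoves nn u v (List.ofFn fun i : Fin (T+1) => (sp i).1) := by
      have hnt : ¬ ∃ e ∈ (List.ofFn fun j : Fin T => (sp j, dm j)),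
          e.1.2 = (Sum.inl 3 : Fin 4 ⊕ (Fin nn × ℕ)) := by
        rw [trig_iff]
        rintro ⟨j, hj, h3⟩
        exact hTmin j hj h3
      erw [hcons T, dstratL, if_neg hnt, if_pos hT]
      congr 1
      rw [Wsnoc T, List.map_ofFn]
      rfl
    have hex : ∃ ms : List (Bool × Fin 7),
        dupApply (AL nn u v) BL
          ⟨(Sum.inl 3 : Fin 4 ⊕ (Fin nn × ℕ)),
            (List.ofFn fun i : Fin (T+1) => (sp i).1).filter σPL,
            (List.ofFn fun i : Fin (T+1) => (sp i).1).filter (fun x => !σPL x),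
            (0 : Fin 7)⟩ ms
          = some ⟨(Sum.inl 3 : Fin 4 ⊕ (Fin nn × ℕ)), [], [], (5 : Fin 7)⟩ ∧
          ∃ x ∈ ms, x.2 = (5 : Fin 7) := by
      rw [hf1, hf2]
      exact dup_core _ _ _ hUV
    obtain ⟨hbig, hbig5⟩ := bigMoves_spec nn u v _ hex
    have hcfgT1 : playCfg (AL nn u v) BL σPL sp dm (T+1)
        = some ⟨(Sum.inl 3 : Fin 4 ⊕ (Fin nn × ℕ)), [], [], (5 : Fin 7)⟩ := by
      have ht' := hleg T _ hcfgT
      rw [playCfg_succ_some hcfgT ht', hdmT]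
      have hmid : midCfg σPL
          (⟨qT, (List.ofFn fun i : Fin T => (sp i).1).filter σPL,
            (List.ofFn fun i : Fin T => (sp i).1).filter (fun x => !σPL x),
            (0 : Fin 7)⟩ : Cfg (AL nn u v) BL) (sp T)
          = ⟨(Sum.inl 3 : Fin 4 ⊕ (Fin nn × ℕ)),
            (List.ofFn fun i : Fin (T+1) => (sp i).1).filter σPL,
            (List.ofFn fun i : Fin (T+1) => (sp i).1).filter (fun x => !σPL x),
            (0 : Fin 7)⟩ := by
        rw [midCfg, Wsnoc T, List.filter_append, List.filter_append]
        simp [hhb, hT, σPL]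
      rw [hmid]
      exact hbig
    have dmpost : ∀ n, T < n → dm n = [(σPL (sp n).1, (5 : Fin 7))] := by
      intro n hn
      have htr : ∃ e ∈ (List.ofFn fun j : Fin n => (sp j, dm j)),
          e.1.2 = (Sum.inl 3 : Fin 4 ⊕ (Fin nn × ℕ)) := (trig_iff n).2 ⟨T, hn, hT⟩
      erw [hcons n, dstratL, if_pos htr]; rfl
    have post : ∀ n, T < n → ∃ q : (AL nn u v).Q,
        playCfg (AL nn u v) BL σPL sp dm n = some ⟨q, [], [], (5 : Fin 7)⟩ := by
      intro n
      induction n with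
      | zero => intro hcon; exact absurd hcon (Nat.not_lt_zero T)
      | succ n ih =>
        intro hn
        rcases Nat.lt_succ_iff_lt_or_eq.1 hn with hn' | rfl
        · obtain ⟨q, hq⟩ := ih hn'
          have ht := hleg n _ hq
          rw [playCfg_succ_some hq ht, dmpost n hn']
          cases hσ : σPL (sp n).1
          · refine ⟨(sp n).2, ?_⟩
            erw [show midCfg σPL (⟨q, [], [], (5:Fin 7)⟩ : Cfg (AL nn u v) BL) (sp n)
                = ⟨(sp n).2, [], [(sp n).1], (5:Fin 7)⟩ from by rw [midCfg]; simp [hσ],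
              dup_false (blt11 (sp n).1)]
            rfl
          · refine ⟨(sp n).2, ?_⟩
            erw [show midCfg σPL (⟨q, [], [], (5:Fin 7)⟩ : Cfg (AL nn u v) BL) (sp n)
                = ⟨(sp n).2, [(sp n).1], [], (5:Fin 7)⟩ from by rw [midCfg]; simp [hσ],
              dup_true (blt11 (sp n).1)]
            rfl
        · exact ⟨_, hcfgT1⟩
    refine ⟨?_, fun n c _ => ⟨le_top, le_top⟩, Or.inr ⟨?_, ?_⟩⟩
    · intro n
      rcases le_or_gt n T with hn | hn
      · obtain ⟨-, q, hq, -⟩ := pre n (fun i hi => hTmin i (lt_of_lt_of_le hi hn))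
        rw [hq]; rfl
      · obtain ⟨q, hq⟩ := post n hn
        rw [hq]; rfl
    · intro n j
      refine ⟨max n (T+1), ?_⟩
      have hm : T < max n (T+1) := lt_of_lt_of_le (Nat.lt_succ_self T) (le_max_right _ _)
      obtain ⟨q, hq⟩ := post _ hm
      obtain ⟨h1, h2⟩ := play_count _ _ hq
      calc pushed σPL sp j n ≤ pushed σPL sp j (max n (T+1)) :=
            pushed_mono _ _ _ (le_max_left _ _)
        _ ≤ consumed dm j (max n (T+1)) := by
            cases j
            · simp only [List.length_nil] at h2; omega
            · simp only [List.length_nil] at h1; omega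
    · intro n
      have hm : T < max n (T+1) := lt_of_lt_of_le (Nat.lt_succ_self T) (le_max_right _ _)
      refine ⟨max n (T+1), le_max_left _ _, ?_⟩
      rw [dmpost _ hm]
      exact ⟨(σPL (sp (max n (T+1))).1, (5 : Fin 7)), List.mem_singleton_self _, rfl⟩
  · -- Spoiler never reaches the accepting state
    have hall : ∀ n, (sp n).2 ≠ Sum.inl 3 := by
      intro n hn
      exact htrig ⟨n, hn⟩
    refine ⟨?_, fun n c _ => ⟨le_top, le_top⟩, Or.inl ⟨0, fun n _ => hall n⟩⟩
    intro n
    obtain ⟨-, q, hq, -⟩ := pre n (fun i _ => hall i)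
    rw [hq]; rfl
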